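/- In A = ℝ[X,Y]/(X²+Y²−1), let I be the ideal generated by 1+x and y. Then I² is the principal ideal generated by 1+x. -/

import Mathlib

open MvPolynomial

noncomputable abbrev circleRingR : Type :=
  MvPolynomial (Fin 2) ℝ ⧸
    Ideal.span {(X 0 : MvPolynomial (Fin 2) ℝ) ^ 2 + X 1 ^ 2 - 1}

noncomputable abbrev xClass : circleRingR := Ideal.Quotient.mk _ (X 0)

noncomputable abbrev yClass : circleRingR := Ideal.Quotient.mk _ (X 1)

lemma ysq : yClass * yClass = (1 + xClass) * (1 - xClass) := by
  show Ideal.Quotient.mk _ (X 1) * Ideal.Quotient.mk _ (X 1) = _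
  have : (1 + xClass) * (1 - xClass) = Ideal.Quotient.mk _ ((1 + X 0) * (1 - X 0)) := by
    simp [xClass]
  rw [this, ← map_mul, Ideal.Quotient.eq, Ideal.mem_span_singleton]
  exact ⟨1, by ring⟩

lemma two_one_add_x : (1 + xClass) ^ 2 + yClass ^ 2 = 2 * (1 + xClass) := by
  have h1 : (1 + xClass) ^ 2 + yClass ^ 2 =
      Ideal.Quotient.mk _ ((1 + X 0) ^ 2 + X 1 ^ 2) := by
    simp [xClass, yClass]
  have h2 : (2 : circleRingR) * (1 + xClass) =
      Ideal.Quotient.mk _ (2 * (1 + X 0)) := by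
    rw [map_mul, map_add, map_one, map_ofNat]
  rw [h1, h2, Ideal.Quotient.eq, Ideal.mem_span_singleton]
  exact ⟨1, by ring⟩

theorem stmt_6 :
    (Ideal.span {1 + xClass, yClass}) ^ 2 = Ideal.span {1 + xClass} := by
  apply le_antisymm
  · rw [show (Ideal.span {1 + xClass, yClass}) ^ 2
        = Ideal.span {1 + xClass, yClass} * Ideal.span {1 + xClass, yClass} from sq _,
      Ideal.span_mul_span, Ideal.span_le]
    intro z hz
    simp only [Set.mem_mul, Set.mem_iUnion, Set.mem_insert_iff, Set.mem_singleton_iff, exists_prop] at hz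
    obtain ⟨a, ha, b, hb, rfl⟩ := hz
    rw [SetLike.mem_coe, Ideal.mem_span_singleton]
    rcases ha with rfl | rfl <;> rcases hb with rfl | rfl
    · exact ⟨1 + xClass, by ring⟩
    · exact ⟨yClass, by ring⟩
    · exact ⟨yClass, by ring⟩
    · exact ⟨1 - xClass, ysq⟩
  · rw [Ideal.span_le, Set.singleton_subset_iff, SetLike.mem_coe]
    have hx : (1 + xClass) ∈ Ideal.span {1 + xClass, yClass} :=
      Ideal.subset_span (Set.mem_insert _ _)
    have hy : yClass ∈ Ideal.span {1 + xClass, yClass} :=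
      Ideal.subset_span (Set.mem_insert_of_mem _ rfl)
    have hmem : (1 + xClass) ^ 2 + yClass ^ 2 ∈
        (Ideal.span {1 + xClass, yClass}) ^ 2 :=
      Ideal.add_mem _ (Ideal.pow_mem_pow hx 2) (Ideal.pow_mem_pow hy 2)
    rw [two_one_add_x] at hmem
    have hhalf : (algebraMap ℝ circleRingR) (1/2) * (2 * (1 + xClass)) = 1 + xClass := by
      rw [← mul_assoc, ← map_ofNat (algebraMap ℝ circleRingR) 2, ← map_mul]
      norm_num
    have h := Ideal.mul_mem_left _ ((algebraMap ℝ circleRingR) (1/2)) hmem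
    rwa [hhalf] at h
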